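/- Let n ≥ 3 and let A_1,…,A_n be Hermitian operators on a finite-dimensional complex Hilbert space with A_x² = 1 for all x. Define the Leggett–Garg operator L̂ = (1/2)∑_{x=1}^{n−1}{A_x, A_{x+1}} − (1/2){A_n, A_1}, where {·,·} is the anticommutator. Then L̂ ≤ n·cos(π/n)·1 in the Loewner (positive semidefinite) order. -/

import Mathlib

open Real Finset Matrix ComplexOrder


noncomputable def Sm (n : ℕ) (e : ℤ) : ℂ :=
  ∑ k ∈ Finset.range n, Complex.exp ((2*k+1) * e * ((π:ℂ)/n) * Complex.I)

lemma Sm_eq (n : ℕ) (hn : 0 < n) (e : ℤ) :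
    Sm n e = Complex.exp (e * ((π:ℂ)/n) * Complex.I) * (if (n:ℤ) ∣ e then (n:ℂ) else 0) := by
  have hn0 : (n:ℂ) ≠ 0 := Nat.cast_ne_zero.mpr hn.ne'
  have hterm : ∀ k : ℕ, Complex.exp ((2*k+1) * e * ((π:ℂ)/n) * Complex.I)
      = Complex.exp (e * ((π:ℂ)/n) * Complex.I) *
        Complex.exp ((2*(π:ℂ)*e/n) * Complex.I) ^ k := by
    intro k
    rw [← Complex.exp_nat_mul, ← Complex.exp_add]
    ring_nf
  unfold Sm
  simp only [hterm, ← Finset.mul_sum]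
  congr 1
  set z : ℂ := Complex.exp ((2*(π:ℂ)*e/n) * Complex.I) with hz
  by_cases hdvd : (n:ℤ) ∣ e
  · rw [if_pos hdvd]
    obtain ⟨m, hm⟩ := hdvd
    have hz1 : z = 1 := by
      rw [hz]
      have : (2*(π:ℂ)*e/n) * Complex.I = (m:ℤ) * (2 * π * Complex.I) := by
        have he : (e:ℂ) = (n:ℂ) * (m:ℂ) := by exact_mod_cast congrArg (Int.cast : ℤ → ℂ) hm
        field_simp; rw [he]
      rw [this, Complex.exp_int_mul_two_pi_mul_I]
    rw [hz1]
    simp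
  · have hz1 : z ≠ 1 := by
      intro h
      rw [hz, Complex.exp_eq_one_iff] at h
      obtain ⟨m, hm⟩ := h
      apply hdvd
      have hπ : (π:ℂ) ≠ 0 := Complex.ofReal_ne_zero.mpr Real.pi_ne_zero
      have hI : Complex.I ≠ 0 := Complex.I_ne_zero
      have : (e:ℂ) = (n:ℂ) * m := by
        field_simp at hm
        -- hm : 2 * π * e * I = m * (2 * π * I) * n  (roughly)
        have h2 : (2:ℂ) ≠ 0 := two_ne_zero
        apply mul_left_cancel₀ h2
        apply mul_left_cancel₀ hπ
        apply mul_right_cancel₀ hI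
        ring_nf
        ring_nf at hm
        linear_combination (↑π * Complex.I * 2) * hm
      exact ⟨m, by exact_mod_cast this⟩
    have hzn : z ^ n = 1 := by
      rw [hz, ← Complex.exp_nat_mul]
      have : (n:ℂ) * ((2*(π:ℂ)*e/n) * Complex.I) = (e:ℤ) * (2 * π * Complex.I) := by
        field_simp
      rw [this, Complex.exp_int_mul_two_pi_mul_I]
    rw [geom_sum_eq hz1, hzn]
    simp [hdvd]

noncomputable def lam (n k : ℕ) : ℝ := Real.cos (π/n) - Real.cos ((2*k+1)*π/n)

lemma Tm_eq (n : ℕ) (d : ℤ) :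
    ∑ k ∈ Finset.range n, (lam n k : ℂ) * Complex.exp ((2*k+1) * d * ((π:ℂ)/n) * Complex.I)
    = (Real.cos (π/n) : ℂ) * Sm n d - (1/2) * (Sm n (d+1) + Sm n (d-1)) := by
  unfold Sm
  rw [Finset.mul_sum, ← Finset.sum_add_distrib, Finset.mul_sum, ← Finset.sum_sub_distrib]
  apply Finset.sum_congr rfl
  intro k _
  unfold lam
  push_cast
  simp only [show ∀ z:ℂ, Complex.cos z = (Complex.exp (z*Complex.I) + Complex.exp (-(z*Complex.I)))/2 from fun z => by rw [Complex.cos]; ring_nf]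
  have h1 : Complex.exp ((2*(k:ℂ)+1) * (d+1) * ((π:ℂ)/n) * Complex.I)
      = Complex.exp (((2*(k:ℂ)+1)*π/n) * Complex.I) * Complex.exp ((2*(k:ℂ)+1) * d * ((π:ℂ)/n) * Complex.I) := by
    rw [← Complex.exp_add]; ring_nf
  have h2 : Complex.exp ((2*(k:ℂ)+1) * (d-1) * ((π:ℂ)/n) * Complex.I)
      = Complex.exp (-(((2*(k:ℂ)+1)*π/n) * Complex.I)) * Complex.exp ((2*(k:ℂ)+1) * d * ((π:ℂ)/n) * Complex.I) := by
    rw [← Complex.exp_add]; ring_nf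
  rw [h1, h2]
  have e1 : ((2*(k:ℂ)+1)*(π:ℂ)/n) * Complex.I = ((2*(k:ℂ)+1)*(π:ℂ)/n : ℂ) * Complex.I := rfl
  ring_nf

lemma lam_nonneg (n k : ℕ) (hn : 3 ≤ n) (hk : k < n) : 0 ≤ lam n k := by
  unfold lam
  rw [sub_nonneg]
  have hπ := Real.pi_pos
  have hn0 : (0:ℝ) < n := by positivity
  have h1 : (0:ℝ) < π/n := by positivity
  set t : ℝ := (2*k+1)*π/n with ht
  have htlow : π/n ≤ t := by
    rw [ht, div_le_div_iff₀ hn0 hn0]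
    have h2k : (1:ℝ) ≤ 2*k+1 := by
      have := Nat.cast_nonneg (α := ℝ) k; linarith
    have := mul_le_mul_of_nonneg_right h2k (le_of_lt (mul_pos hπ hn0))
    nlinarith
  have hthigh : t ≤ (2*n-1)*π/n := by
    rw [ht, div_le_div_iff₀ hn0 hn0]
    have : (2*(k:ℝ)+1) ≤ 2*n-1 := by
      have : (k:ℝ) + 1 ≤ n := by exact_mod_cast Nat.succ_le_of_lt hk
      linarith
    have := mul_le_mul_of_nonneg_right this (le_of_lt (mul_pos hπ hn0))
    nlinarith
  rcases le_or_gt t π with hcase | hcase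
  · exact Real.cos_le_cos_of_nonneg_of_le_pi h1.le hcase htlow
  · have : Real.cos t = Real.cos (2*π - t) := by
      rw [Real.cos_sub]
      simp [Real.cos_two_pi, Real.sin_two_pi]
    rw [this]
    apply Real.cos_le_cos_of_nonneg_of_le_pi h1.le (by linarith)
    have : π/n ≤ 2*π - (2*n-1)*π/n := by
      rw [le_sub_iff_add_le, ← add_div, div_le_iff₀ hn0]
      ring_nf
      nlinarith
    linarith

noncomputable def cc (n k x : ℕ) : ℂ :=
  (Real.sqrt (lam n k / n) : ℂ) * Complex.exp ((2*k+1) * x * ((π:ℂ)/n) * Complex.I)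

lemma dvd_cases (n : ℕ) (hn : 0 < n) (e : ℤ) (h1 : -n < e) (h2 : e < 2*n)
    (h : (n:ℤ) ∣ e) : e = 0 ∨ e = n := by
  obtain ⟨m, rfl⟩ := h
  have hn' : (0:ℤ) < n := by exact_mod_cast hn
  have hm1 : -1 < m := by
    by_contra hc
    push_neg at hc
    nlinarith
  have hm2 : m < 2 := by
    by_contra hc
    push_neg at hc
    nlinarith
  interval_cases m <;> simp

noncomputable def Nfun (n x y : ℕ) : ℂ :=
  (if x = y then ((Real.cos (π/n) : ℝ) : ℂ) else 0)
  + (if y = x + 1 then -(1/2) else 0)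
  + (if x = y + 1 then -(1/2) else 0)
  + (if x = n ∧ y = 1 then 1/2 else 0)
  + (if x = 1 ∧ y = n then 1/2 else 0)

lemma key (n x y : ℕ) (hn : 3 ≤ n) (hx1 : 1 ≤ x) (hxn : x ≤ n) (hy1 : 1 ≤ y) (hyn : y ≤ n) :
    ∑ k ∈ Finset.range n, (starRingEnd ℂ) (cc n k x) * cc n k y = Nfun n x y := by
  have hn0 : 0 < n := by omega
  have hnC : (n:ℂ) ≠ 0 := Nat.cast_ne_zero.mpr hn0.ne'
  have hterm : ∀ k ∈ Finset.range n, (starRingEnd ℂ) (cc n k x) * cc n k y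
      = (1/(n:ℂ)) * ((lam n k : ℂ) * Complex.exp ((2*(k:ℂ)+1) * ((((y:ℤ) - (x:ℤ)):ℤ):ℂ) * ((π:ℂ)/n) * Complex.I)) := by
    intro k hk
    unfold cc
    rw [_root_.map_mul, ← Complex.exp_conj, Complex.conj_ofReal]
    have hconj : (starRingEnd ℂ) ((2*(k:ℂ)+1) * (x:ℂ) * ((π:ℂ)/n) * Complex.I)
        = -((2*(k:ℂ)+1) * (x:ℂ) * ((π:ℂ)/n) * Complex.I) := by
      rw [show (2*(k:ℂ)+1) * (x:ℂ) * ((π:ℂ)/n) * Complex.I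
            = (((2*(k:ℝ)+1)*(x:ℝ)*(π/(n:ℝ)) : ℝ) : ℂ) * Complex.I by push_cast; ring]
      rw [_root_.map_mul, Complex.conj_ofReal, Complex.conj_I]
      push_cast
      ring
    rw [hconj]
    have hsq : ((Real.sqrt (lam n k / n) : ℝ) : ℂ) * ((Real.sqrt (lam n k / n) : ℝ) : ℂ)
        = ((lam n k : ℝ) : ℂ) / (n:ℂ) := by
      rw [← Complex.ofReal_mul, Real.mul_self_sqrt (div_nonneg (lam_nonneg n k hn (Finset.mem_range.mp hk)) (Nat.cast_nonneg n))]
      push_cast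
      ring
    calc ((Real.sqrt (lam n k / n) : ℝ) : ℂ) * Complex.exp (-((2*(k:ℂ)+1) * (x:ℂ) * ((π:ℂ)/n) * Complex.I)) *
          (((Real.sqrt (lam n k / n) : ℝ) : ℂ) * Complex.exp ((2*(k:ℂ)+1) * (y:ℂ) * ((π:ℂ)/n) * Complex.I))
        = (((Real.sqrt (lam n k / n) : ℝ) : ℂ) * ((Real.sqrt (lam n k / n) : ℝ) : ℂ)) *
          (Complex.exp (-((2*(k:ℂ)+1) * (x:ℂ) * ((π:ℂ)/n) * Complex.I) + (2*(k:ℂ)+1) * (y:ℂ) * ((π:ℂ)/n) * Complex.I)) := by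
          rw [Complex.exp_add]; ring
      _ = (1/(n:ℂ)) * ((lam n k : ℂ) * Complex.exp ((2*(k:ℂ)+1) * ((((y:ℤ) - (x:ℤ)):ℤ):ℂ) * ((π:ℂ)/n) * Complex.I)) := by
          rw [hsq]
          have harg : -((2*(k:ℂ)+1) * (x:ℂ) * ((π:ℂ)/n) * Complex.I) + (2*(k:ℂ)+1) * (y:ℂ) * ((π:ℂ)/n) * Complex.I
              = (2*(k:ℂ)+1) * ((((y:ℤ) - (x:ℤ)):ℤ):ℂ) * ((π:ℂ)/n) * Complex.I := by
            push_cast; ring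
          rw [harg]; ring
  rw [Finset.sum_congr rfl hterm, ← Finset.mul_sum, Tm_eq n ((y:ℤ) - (x:ℤ)),
      Sm_eq n hn0 ((y:ℤ) - (x:ℤ)), Sm_eq n hn0 (((y:ℤ) - (x:ℤ))+1), Sm_eq n hn0 (((y:ℤ) - (x:ℤ))-1)]
  have hexp0 : ∀ (e : ℤ), e = 0 → Complex.exp ((e:ℂ) * ((π:ℂ)/n) * Complex.I) = 1 := by
    intro e he; rw [he]; simp
  have hexpn : ∀ (e : ℤ), e = n → Complex.exp ((e:ℂ) * ((π:ℂ)/n) * Complex.I) = -1 := by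
    intro e he
    rw [he]
    rw [show ((n:ℤ):ℂ) * ((π:ℂ)/n) * Complex.I = (π:ℂ) * Complex.I by push_cast; field_simp]
    exact Complex.exp_pi_mul_I
  have hexpnn : ∀ (e : ℤ), e = -(n:ℤ) → Complex.exp ((e:ℂ) * ((π:ℂ)/n) * Complex.I) = -1 := by
    intro e he
    rw [he]
    rw [show ((-(n:ℤ):ℤ):ℂ) * ((π:ℂ)/n) * Complex.I = -((π:ℂ) * Complex.I) by push_cast; field_simp]
    rw [Complex.exp_neg, Complex.exp_pi_mul_I]
    norm_num
  have hnd : ∀ (e : ℤ), -(n:ℤ) < e → e < 2*n → e ≠ 0 → e ≠ n → ¬ ((n:ℤ) ∣ e) := by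
    intro e hlo hhi h0 h1 h
    rcases dvd_cases n hn0 e hlo hhi h with h'|h' <;> [exact h0 h'; exact h1 h']
  unfold Nfun
  by_cases h0 : x = y
  · rw [if_pos h0, if_neg (show ¬(y = x+1) by omega), if_neg (show ¬(x = y+1) by omega), if_neg (show ¬(x = n ∧ y = 1) by omega), if_neg (show ¬(x = 1 ∧ y = n) by omega)]
    rw [if_pos (show (n:ℤ) ∣ ((y:ℤ) - (x:ℤ)) from ⟨0, by omega⟩),
        if_neg (hnd (((y:ℤ) - (x:ℤ))+1) (by omega) (by omega) (by omega) (by omega)),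
        if_neg (hnd (((y:ℤ) - (x:ℤ))-1) (by omega) (by omega) (by omega) (by omega))]
    rw [hexp0 ((y:ℤ) - (x:ℤ)) (by omega)]
    field_simp
    ring
  · by_cases h1 : y = x + 1
    · rw [if_neg h0, if_pos h1, if_neg (show ¬(x = y+1) by omega), if_neg (show ¬(x = n ∧ y = 1) by omega), if_neg (show ¬(x = 1 ∧ y = n) by omega)]
      rw [if_neg (hnd (((y:ℤ) - (x:ℤ))) (by omega) (by omega) (by omega) (by omega)),
          if_neg (hnd (((y:ℤ) - (x:ℤ))+1) (by omega) (by omega) (by omega) (by omega)),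
          if_pos (show (n:ℤ) ∣ (((y:ℤ) - (x:ℤ))-1) from ⟨0, by omega⟩)]
      rw [hexp0 (((y:ℤ) - (x:ℤ))-1) (by omega)]
      field_simp
      ring
    · by_cases h2 : x = y + 1
      · rw [if_neg h0, if_neg h1, if_pos h2, if_neg (show ¬(x = n ∧ y = 1) by omega), if_neg (show ¬(x = 1 ∧ y = n) by omega)]
        rw [if_neg (hnd (((y:ℤ) - (x:ℤ))) (by omega) (by omega) (by omega) (by omega)),
            if_pos (show (n:ℤ) ∣ ((((y:ℤ) - (x:ℤ)))+1) from ⟨0, by omega⟩),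
            if_neg (hnd (((y:ℤ) - (x:ℤ))-1) (by omega) (by omega) (by omega) (by omega))]
        rw [hexp0 (((y:ℤ) - (x:ℤ))+1) (by omega)]
        field_simp
        ring
      · by_cases h3 : x = 1 ∧ y = n
        · rw [if_neg h0, if_neg h1, if_neg h2, if_neg (show ¬(x = n ∧ y = 1) by omega), if_pos h3]
          rw [if_neg (hnd (((y:ℤ) - (x:ℤ))) (by omega) (by omega) (by omega) (by omega)),
              if_pos (show (n:ℤ) ∣ ((((y:ℤ) - (x:ℤ)))+1) from ⟨1, by omega⟩),
              if_neg (hnd (((y:ℤ) - (x:ℤ))-1) (by omega) (by omega) (by omega) (by omega))]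
          rw [hexpn (((y:ℤ) - (x:ℤ))+1) (by omega)]
          field_simp
          ring
        · by_cases h4 : x = n ∧ y = 1
          · rw [if_neg h0, if_neg h1, if_neg h2, if_pos h4, if_neg (show ¬(x = 1 ∧ y = n) by omega)]
            rw [if_neg (hnd (((y:ℤ) - (x:ℤ))) (by omega) (by omega) (by omega) (by omega)),
                if_neg (hnd (((y:ℤ) - (x:ℤ))+1) (by omega) (by omega) (by omega) (by omega)),
                if_pos (show (n:ℤ) ∣ (((y:ℤ) - (x:ℤ))-1) from ⟨-1, by omega⟩)]
            rw [hexpnn (((y:ℤ) - (x:ℤ))-1) (by omega)]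
            field_simp
            ring
          · rw [if_neg h0, if_neg h1, if_neg h2, if_neg h4, if_neg h3]
            rw [if_neg (hnd (((y:ℤ) - (x:ℤ))) (by omega) (by omega) (by omega) (by omega)),
                if_neg (hnd (((y:ℤ) - (x:ℤ))+1) (by omega) (by omega) (by omega) (by omega)),
                if_neg (hnd (((y:ℤ) - (x:ℤ))-1) (by omega) (by omega) (by omega) (by omega))]
            simp

set_option maxHeartbeats 1000000 in
theorem lg_quantum_bound (n d : ℕ) (hn : 3 ≤ n)
    (A : ℕ → Matrix (Fin d) (Fin d) ℂ)
    (hherm : ∀ x, 1 ≤ x → x ≤ n → (A x).IsHermitian)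
    (hinv : ∀ x, 1 ≤ x → x ≤ n → A x * A x = 1) :
    (((n * Real.cos (π / n) : ℝ) : ℂ) • (1 : Matrix (Fin d) (Fin d) ℂ) -
      ((1 / 2 : ℂ) • ∑ x ∈ Finset.Icc 1 (n - 1), (A x * A (x + 1) + A (x + 1) * A x) -
        (1 / 2 : ℂ) • (A n * A 1 + A 1 * A n))).PosSemidef := by
  set B : ℕ → Matrix (Fin d) (Fin d) ℂ := fun k => ∑ x ∈ Finset.Icc 1 n, cc n k x • A x with hB
  have main : (((n * Real.cos (π / n) : ℝ) : ℂ) • (1 : Matrix (Fin d) (Fin d) ℂ) -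
      ((1 / 2 : ℂ) • ∑ x ∈ Finset.Icc 1 (n - 1), (A x * A (x + 1) + A (x + 1) * A x) -
        (1 / 2 : ℂ) • (A n * A 1 + A 1 * A n)))
      = ∑ k ∈ Finset.range n, (B k)ᴴ * (B k) := by
    have hBk : ∀ k, (B k)ᴴ * (B k)
        = ∑ x ∈ Finset.Icc 1 n, ∑ y ∈ Finset.Icc 1 n,
            ((starRingEnd ℂ) (cc n k x) * cc n k y) • (A x * A y) := by
      intro k
      rw [hB]
      simp only [Matrix.conjTranspose_sum, Matrix.conjTranspose_smul]
      rw [Finset.sum_mul_sum]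
      apply Finset.sum_congr rfl
      intro x hx
      apply Finset.sum_congr rfl
      intro y hy
      obtain ⟨hx1, hxn⟩ := Finset.mem_Icc.mp hx
      rw [hherm x hx1 hxn]
      rw [smul_mul_assoc, mul_smul_comm, smul_smul]
      rfl
    have hsum : ∑ k ∈ Finset.range n, (B k)ᴴ * (B k)
        = ∑ x ∈ Finset.Icc 1 n, ∑ y ∈ Finset.Icc 1 n, Nfun n x y • (A x * A y) := by
      simp only [hBk]
      rw [Finset.sum_comm]
      apply Finset.sum_congr rfl
      intro x hx
      rw [Finset.sum_comm]
      apply Finset.sum_congr rfl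
      intro y hy
      rw [← Finset.sum_smul]
      obtain ⟨hx1, hxn⟩ := Finset.mem_Icc.mp hx
      obtain ⟨hy1, hyn⟩ := Finset.mem_Icc.mp hy
      rw [key n x y hn hx1 hxn hy1 hyn]
    rw [hsum]
    -- split Nfun into five pieces
    unfold Nfun
    simp only [add_smul, Finset.sum_add_distrib]
    have P1 : ∑ x ∈ Finset.Icc 1 n, ∑ y ∈ Finset.Icc 1 n,
        (if x = y then ((Real.cos (π/n) : ℝ) : ℂ) else 0) • (A x * A y)
        = ((n * Real.cos (π / n) : ℝ) : ℂ) • (1 : Matrix (Fin d) (Fin d) ℂ) := by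
      have inner : ∀ x ∈ Finset.Icc 1 n, ∑ y ∈ Finset.Icc 1 n,
          (if x = y then ((Real.cos (π/n) : ℝ) : ℂ) else 0) • (A x * A y)
          = ((Real.cos (π/n) : ℝ) : ℂ) • (1 : Matrix (Fin d) (Fin d) ℂ) := by
        intro x hx
        simp only [ite_smul, zero_smul]
        rw [Finset.sum_ite_eq (Finset.Icc 1 n) x (fun y => ((Real.cos (π/n) : ℝ) : ℂ) • (A x * A y))]
        obtain ⟨hx1, hxn⟩ := Finset.mem_Icc.mp hx
        rw [if_pos hx, hinv x hx1 hxn]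
      rw [Finset.sum_congr rfl inner, Finset.sum_const, Nat.card_Icc,
          show n + 1 - 1 = n by omega, ← Nat.cast_smul_eq_nsmul ℂ, smul_smul]
      congr 1
      push_cast
      ring
    have P2 : ∑ x ∈ Finset.Icc 1 n, ∑ y ∈ Finset.Icc 1 n,
        (if y = x + 1 then (-(1/2):ℂ) else 0) • (A x * A y)
        = ∑ x ∈ Finset.Icc 1 (n-1), (-(1/2):ℂ) • (A x * A (x+1)) := by
      have inner : ∀ x ∈ Finset.Icc 1 n, (∑ y ∈ Finset.Icc 1 n,
          (if y = x + 1 then (-(1/2):ℂ) else 0) • (A x * A y))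
          = if x + 1 ∈ Finset.Icc 1 n then (-(1/2):ℂ) • (A x * A (x+1)) else 0 := by
        intro x _
        simp only [ite_smul, zero_smul]
        exact Finset.sum_ite_eq' (Finset.Icc 1 n) (x+1) (fun y => (-(1/2):ℂ) • (A x * A y))
      rw [Finset.sum_congr rfl inner, ← Finset.sum_filter]
      apply Finset.sum_congr _ (fun _ _ => rfl)
      ext a
      simp only [Finset.mem_filter, Finset.mem_Icc]
      omega
    have P3 : ∑ x ∈ Finset.Icc 1 n, ∑ y ∈ Finset.Icc 1 n,
        (if x = y + 1 then (-(1/2):ℂ) else 0) • (A x * A y)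
        = ∑ y ∈ Finset.Icc 1 (n-1), (-(1/2):ℂ) • (A (y+1) * A y) := by
      rw [Finset.sum_comm]
      have inner : ∀ y ∈ Finset.Icc 1 n, (∑ x ∈ Finset.Icc 1 n,
          (if x = y + 1 then (-(1/2):ℂ) else 0) • (A x * A y))
          = if y + 1 ∈ Finset.Icc 1 n then (-(1/2):ℂ) • (A (y+1) * A y) else 0 := by
        intro y _
        simp only [ite_smul, zero_smul]
        exact Finset.sum_ite_eq' (Finset.Icc 1 n) (y+1) (fun x => (-(1/2):ℂ) • (A x * A y))
      rw [Finset.sum_congr rfl inner, ← Finset.sum_filter]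
      apply Finset.sum_congr _ (fun _ _ => rfl)
      ext a
      simp only [Finset.mem_filter, Finset.mem_Icc]
      omega
    have P4 : ∑ x ∈ Finset.Icc 1 n, ∑ y ∈ Finset.Icc 1 n,
        (if x = n ∧ y = 1 then (1/2:ℂ) else 0) • (A x * A y) = (1/2:ℂ) • (A n * A 1) := by
      rw [Finset.sum_eq_single n
        (fun b _ hb => Finset.sum_eq_zero fun y _ => by rw [if_neg (fun h => hb h.1), zero_smul])
        (fun hmem => absurd (Finset.mem_Icc.mpr ⟨by omega, le_rfl⟩) hmem)]
      rw [Finset.sum_eq_single 1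
        (fun b _ hb => by rw [if_neg (fun h => hb h.2), zero_smul])
        (fun hmem => absurd (Finset.mem_Icc.mpr ⟨le_rfl, by omega⟩) hmem)]
      rw [if_pos ⟨rfl, rfl⟩]
    have P5 : ∑ x ∈ Finset.Icc 1 n, ∑ y ∈ Finset.Icc 1 n,
        (if x = 1 ∧ y = n then (1/2:ℂ) else 0) • (A x * A y) = (1/2:ℂ) • (A 1 * A n) := by
      rw [Finset.sum_eq_single 1
        (fun b _ hb => Finset.sum_eq_zero fun y _ => by rw [if_neg (fun h => hb h.1), zero_smul])
        (fun hmem => absurd (Finset.mem_Icc.mpr ⟨le_rfl, by omega⟩) hmem)]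
      rw [Finset.sum_eq_single n
        (fun b _ hb => by rw [if_neg (fun h => hb h.2), zero_smul])
        (fun hmem => absurd (Finset.mem_Icc.mpr ⟨by omega, le_rfl⟩) hmem)]
      rw [if_pos ⟨rfl, rfl⟩]
    rw [P1, P2, P3, P4, P5]
    simp only [Finset.sum_add_distrib, smul_add, neg_smul, Finset.sum_neg_distrib, ← Finset.smul_sum]
    abel
  rw [main]
  apply Finset.sum_induction _ _ (fun a b ha hb => ha.add hb) Matrix.PosSemidef.zero
  intro k _
  exact Matrix.posSemidef_conjTranspose_mul_self (B k)
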